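/- Let y_1 ≥ … ≥ y_p ≥ 0 and λ_1 ≥ … ≥ λ_p ≥ 0, let μ > 0, and let w* be the unique minimizer of f_μ(w) = Σ_{i=1}^p λ_i w_i + (μ/2)‖w‖² over the feasible set { w : Σ_{i=1}^k (y_i − λ_i) ≤ Σ_{i=1}^k w_i for k = 1,…,p, and w_1 ≥ … ≥ w_p ≥ 0 }. Suppose j < l and y_j − λ_j ≤ y_{j+1} − λ_{j+1} ≤ … ≤ y_l − λ_l, and set I = {j,…,l}. Then (i) w*_j = w*_{j+1} = … = w*_l; and (ii) w* is also the minimizer of the same perturbed problem with y and λ replaced by ỹ and λ̃, where ỹ_i equals the average of (y_k)_{k∈I} for i ∈ I and ỹ_i = y_i otherwise, and λ̃_i equals the average of (λ_k)_{k∈I} for i ∈ I and λ̃_i = λ_i otherwise. -/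

import Mathlib

noncomputable section

/-- Feasible set of the ODS linear program:
`∑_{i=1}^k (y_i − λ_i) ≤ ∑_{i=1}^k w_i` for every `k`, and `w_1 ≥ … ≥ w_p ≥ 0`. -/
def LPFeas {p : ℕ} (y lam w : Fin p → ℝ) : Prop :=
  (∀ k : Fin p, ∑ i ∈ Finset.Iic k, (y i - lam i) ≤ ∑ i ∈ Finset.Iic k, w i) ∧
    Antitone w ∧ (∀ i, 0 ≤ w i)

/-- Extension of a vector by zero: `extz w j = w j` for `j < p` and `0` otherwise
(implements the conventions `w_{p+1} = 0`, `y_{p+1} = 0`). -/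
def extz {p : ℕ} (w : Fin p → ℝ) (j : ℕ) : ℝ :=
  if h : j < p then w ⟨j, h⟩ else 0

/-- Perturbed objective `f_μ(w) = ∑ λ_i w_i + (μ/2)‖w‖²`. -/
def fmu {p : ℕ} (lam : Fin p → ℝ) (μ : ℝ) (w : Fin p → ℝ) : ℝ :=
  (∑ i, lam i * w i) + μ / 2 * ∑ i, w i ^ 2

/-- Replace the entries of `x` on the segment `{j, …, l}` by their average value. -/
def avgMod {p : ℕ} (x : Fin p → ℝ) (j l : Fin p) : Fin p → ℝ :=
  fun i => if i ∈ Finset.Icc j l then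
    (∑ k ∈ Finset.Icc j l, x k) / ((Finset.Icc j l).card : ℝ) else x i

namespace ODS

variable {p : ℕ} {j l : Fin p}

lemma cardI_pos (hjl : j ≤ l) : 0 < ((Finset.Icc j l).card : ℝ) := by
  have : j ∈ Finset.Icc j l := Finset.mem_Icc.2 ⟨le_refl _, hjl⟩
  exact_mod_cast Finset.card_pos.2 ⟨j, this⟩

lemma avgMod_mem (x : Fin p → ℝ) {i : Fin p} (hi : i ∈ Finset.Icc j l) :
    avgMod x j l i = (∑ k ∈ Finset.Icc j l, x k) / ((Finset.Icc j l).card : ℝ) := by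
  simp [avgMod, hi]

lemma avgMod_not_mem (x : Fin p → ℝ) {i : Fin p} (hi : i ∉ Finset.Icc j l) :
    avgMod x j l i = x i := by
  simp [avgMod, hi]

lemma sum_Icc_avgMod (x : Fin p → ℝ) (hjl : j ≤ l) :
    ∑ i ∈ Finset.Icc j l, avgMod x j l i = ∑ i ∈ Finset.Icc j l, x i := by
  have hn := cardI_pos (j := j) (l := l) hjl
  rw [Finset.sum_congr rfl (fun i hi => avgMod_mem x hi), Finset.sum_const, nsmul_eq_mul,
    mul_div_cancel₀ _ (ne_of_gt hn)]

lemma sum_avgMod_subset (x : Fin p → ℝ) (hjl : j ≤ l) {s : Finset (Fin p)}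
    (hs : Finset.Icc j l ⊆ s) :
    ∑ i ∈ s, avgMod x j l i = ∑ i ∈ s, x i := by
  rw [← Finset.sum_sdiff hs, ← Finset.sum_sdiff hs (f := x), sum_Icc_avgMod x hjl]
  congr 1
  exact Finset.sum_congr rfl fun i hi => avgMod_not_mem x (Finset.mem_sdiff.1 hi).2

lemma avg_le {x : Fin p → ℝ} {c : ℝ} (hjl : j ≤ l)
    (h : ∀ i ∈ Finset.Icc j l, x i ≤ c) :
    (∑ k ∈ Finset.Icc j l, x k) / ((Finset.Icc j l).card : ℝ) ≤ c := by
  rw [div_le_iff₀ (cardI_pos hjl)]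
  calc ∑ k ∈ Finset.Icc j l, x k ≤ ∑ k ∈ Finset.Icc j l, c := Finset.sum_le_sum h
    _ = c * (Finset.Icc j l).card := by rw [Finset.sum_const, nsmul_eq_mul]; ring

lemma le_avg {x : Fin p → ℝ} {c : ℝ} (hjl : j ≤ l)
    (h : ∀ i ∈ Finset.Icc j l, c ≤ x i) :
    c ≤ (∑ k ∈ Finset.Icc j l, x k) / ((Finset.Icc j l).card : ℝ) := by
  rw [le_div_iff₀ (cardI_pos hjl)]
  calc c * (Finset.Icc j l).card = ∑ k ∈ Finset.Icc j l, c := by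
        rw [Finset.sum_const, nsmul_eq_mul]; ring
    _ ≤ ∑ k ∈ Finset.Icc j l, x k := Finset.sum_le_sum h

lemma avgMod_antitone {x : Fin p → ℝ} (hx : Antitone x) (hjl : j ≤ l) :
    Antitone (avgMod x j l) := by
  intro a b hab
  by_cases ha : a ∈ Finset.Icc j l <;> by_cases hb : b ∈ Finset.Icc j l
  · rw [avgMod_mem x ha, avgMod_mem x hb]
  · -- a ∈ I, b ∉ I, a ≤ b ⇒ l < b
    rw [avgMod_mem x ha, avgMod_not_mem x hb]
    have hja : j ≤ a := (Finset.mem_Icc.1 ha).1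
    have hlb : l < b := by
      rcases lt_or_ge l b with h | h
      · exact h
      · exact absurd (Finset.mem_Icc.2 ⟨hja.trans hab, h⟩) hb
    calc x b ≤ x l := hx hlb.le
      _ ≤ _ := le_avg hjl fun i hi => hx (Finset.mem_Icc.1 hi).2
  · rw [avgMod_not_mem x ha, avgMod_mem x hb]
    have hbl : b ≤ l := (Finset.mem_Icc.1 hb).2
    have haj : a < j := by
      rcases lt_or_ge a j with h | h
      · exact h
      · exact absurd (Finset.mem_Icc.2 ⟨h, hab.trans hbl⟩) ha
    calc (∑ k ∈ Finset.Icc j l, x k) / ((Finset.Icc j l).card : ℝ)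
        ≤ x j := avg_le hjl fun i hi => hx (Finset.mem_Icc.1 hi).1
      _ ≤ x a := hx haj.le
  · rw [avgMod_not_mem x ha, avgMod_not_mem x hb]; exact hx hab

lemma avgMod_nonneg {x : Fin p → ℝ} (hx : ∀ i, 0 ≤ x i) (i : Fin p) :
    0 ≤ avgMod x j l i := by
  unfold avgMod
  split
  · exact div_nonneg (Finset.sum_nonneg fun k _ => hx k) (Nat.cast_nonneg _)
  · exact hx i



lemma Iic_split {k : Fin p} (hjk : j ≤ k) (f : Fin p → ℝ) :
    ∑ i ∈ Finset.Iic k, f i = ∑ i ∈ Finset.Iio j, f i + ∑ i ∈ Finset.Icc j k, f i := by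
  have hd : Disjoint (Finset.Iio j) (Finset.Icc j k) := by
    rw [Finset.disjoint_left]
    intro a ha hb
    exact absurd (Finset.mem_Icc.1 hb).1 (not_le.2 (Finset.mem_Iio.1 ha))
  have hu : Finset.Iio j ∪ Finset.Icc j k = Finset.Iic k := by
    ext i
    simp only [Finset.mem_union, Finset.mem_Iio, Finset.mem_Icc, Finset.mem_Iic,
      Fin.lt_def, Fin.le_def]
    omega
  rw [← hu, Finset.sum_union hd]

lemma Icc_split {k : Fin p} (hjk : j ≤ k) (hkl : k ≤ l) (f : Fin p → ℝ) :
    ∑ i ∈ Finset.Icc j l, f i = ∑ i ∈ Finset.Icc j k, f i + ∑ i ∈ Finset.Ioc k l, f i := by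
  have hd : Disjoint (Finset.Icc j k) (Finset.Ioc k l) := by
    rw [Finset.disjoint_left]
    intro a ha hb
    exact absurd (Finset.mem_Ioc.1 hb).1 (not_lt.2 (Finset.mem_Icc.1 ha).2)
  have hu : Finset.Icc j k ∪ Finset.Ioc k l = Finset.Icc j l := by
    ext i
    simp only [Finset.mem_union, Finset.mem_Icc, Finset.mem_Ioc, Fin.lt_def, Fin.le_def]
    omega
  rw [← hu, Finset.sum_union hd]

/-- prefix averages of a nondecreasing sequence are below the total average -/
lemma prefix_avg {g : Fin p → ℝ}
    (hmono : ∀ a b : Fin p, j ≤ a → a ≤ b → b ≤ l → g a ≤ g b)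
    {k : Fin p} (hjk : j ≤ k) (hkl : k ≤ l) :
    ((Finset.Icc j l).card : ℝ) * ∑ i ∈ Finset.Icc j k, g i ≤
      ((Finset.Icc j k).card : ℝ) * ∑ i ∈ Finset.Icc j l, g i := by
  have hd : Disjoint (Finset.Icc j k) (Finset.Ioc k l) := by
    rw [Finset.disjoint_left]
    intro a ha hb
    exact absurd (Finset.mem_Ioc.1 hb).1 (not_lt.2 (Finset.mem_Icc.1 ha).2)
  have hu : Finset.Icc j k ∪ Finset.Ioc k l = Finset.Icc j l := by
    ext i
    simp only [Finset.mem_union, Finset.mem_Icc, Finset.mem_Ioc, Fin.lt_def, Fin.le_def]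
    omega
  have hcard : (Finset.Icc j l).card = (Finset.Icc j k).card + (Finset.Ioc k l).card := by
    rw [← hu, Finset.card_union_of_disjoint hd]
  have key : ((Finset.Ioc k l).card : ℝ) * ∑ a ∈ Finset.Icc j k, g a ≤
      ((Finset.Icc j k).card : ℝ) * ∑ b ∈ Finset.Ioc k l, g b := by
    calc ((Finset.Ioc k l).card : ℝ) * ∑ a ∈ Finset.Icc j k, g a
        = ∑ _b ∈ Finset.Ioc k l, ∑ a ∈ Finset.Icc j k, g a := by
          rw [Finset.sum_const, nsmul_eq_mul]
      _ ≤ ∑ b ∈ Finset.Ioc k l, ∑ _a ∈ Finset.Icc j k, g b := by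
          apply Finset.sum_le_sum
          intro b hb
          apply Finset.sum_le_sum
          intro a ha
          have hb' := Finset.mem_Ioc.1 hb
          have ha' := Finset.mem_Icc.1 ha
          exact hmono a b ha'.1 (ha'.2.trans hb'.1.le) hb'.2
      _ = ((Finset.Icc j k).card : ℝ) * ∑ b ∈ Finset.Ioc k l, g b := by
          rw [Finset.mul_sum]
          exact Finset.sum_congr rfl fun b _ => by rw [Finset.sum_const, nsmul_eq_mul]
  rw [Icc_split hjk hkl g, hcard]
  push_cast
  nlinarith [key]

/-- variance identity -/
lemma sum_sq_avg (x : Fin p → ℝ) (hjl : j ≤ l) :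
    ∑ i ∈ Finset.Icc j l, x i ^ 2 =
      ∑ i ∈ Finset.Icc j l,
        (x i - (∑ k ∈ Finset.Icc j l, x k) / ((Finset.Icc j l).card : ℝ)) ^ 2 +
      ((Finset.Icc j l).card : ℝ) *
        ((∑ k ∈ Finset.Icc j l, x k) / ((Finset.Icc j l).card : ℝ)) ^ 2 := by
  have hn := cardI_pos (j := j) (l := l) hjl
  set c := (∑ k ∈ Finset.Icc j l, x k) / ((Finset.Icc j l).card : ℝ) with hc
  have hsum : ∑ k ∈ Finset.Icc j l, x k = ((Finset.Icc j l).card : ℝ) * c := by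
    rw [hc, mul_div_cancel₀ _ (ne_of_gt hn)]
  have hexp : ∀ i ∈ Finset.Icc j l, (x i - c) ^ 2 = x i ^ 2 - 2 * c * x i + c ^ 2 := by
    intro i _; ring
  rw [Finset.sum_congr rfl hexp]
  rw [Finset.sum_add_distrib, Finset.sum_sub_distrib, ← Finset.mul_sum, hsum,
    Finset.sum_const, nsmul_eq_mul]
  ring

/-- Chebyshev's sum inequality for two antitone functions -/
lemma chebyshev {f g : Fin p → ℝ} (hf : Antitone f) (hg : Antitone g) :
    (∑ i ∈ Finset.Icc j l, f i) * ∑ i ∈ Finset.Icc j l, g i ≤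
      ((Finset.Icc j l).card : ℝ) * ∑ i ∈ Finset.Icc j l, f i * g i := by
  have hmv : MonovaryOn f g (Finset.Icc j l : Set (Fin p)) := by
    intro a _ b _ hab
    have : b ≤ a := by
      by_contra h
      push_neg at h
      exact absurd (hg h.le) (not_le.2 hab)
    exact hf this
  exact hmv.sum_mul_sum_le_card_mul_sum



lemma sum_Iio_le {g x : Fin p → ℝ}
    (hcon_lo : ∀ k : Fin p, k < j → ∑ i ∈ Finset.Iic k, g i ≤ ∑ i ∈ Finset.Iic k, x i) :
    ∑ i ∈ Finset.Iio j, g i ≤ ∑ i ∈ Finset.Iio j, x i := by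
  rcases Nat.eq_zero_or_pos j.val with h0 | h0
  · have he : Finset.Iio j = (∅ : Finset (Fin p)) := by
      ext i
      simp [Finset.mem_Iio, Fin.lt_def, h0]
    rw [he]; simp
  · have hjp : j.val - 1 < p := by omega
    set k₀ : Fin p := ⟨j.val - 1, hjp⟩ with hk₀
    have he : Finset.Iio j = Finset.Iic k₀ := by
      ext i
      simp only [Finset.mem_Iio, Finset.mem_Iic, Fin.lt_def, Fin.le_def, hk₀]
      omega
    rw [he]
    exact hcon_lo k₀ (by simp only [Fin.lt_def, hk₀]; omega)

/-- core middle-segment inequality: if the constraints hold below `j` and at/after `l`,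
and `g` has the prefix-average property on `[j,l]`, then all constraints hold against
the averaged `x`. -/
lemma LP_sums {g x : Fin p → ℝ} (hjl : j ≤ l)
    (hpre : ∀ k : Fin p, j ≤ k → k ≤ l →
      ((Finset.Icc j l).card : ℝ) * ∑ i ∈ Finset.Icc j k, g i ≤
        ((Finset.Icc j k).card : ℝ) * ∑ i ∈ Finset.Icc j l, g i)
    (hcon_lo : ∀ k : Fin p, k < j → ∑ i ∈ Finset.Iic k, g i ≤ ∑ i ∈ Finset.Iic k, x i)
    (hcon_hi : ∀ k : Fin p, l ≤ k → ∑ i ∈ Finset.Iic k, g i ≤ ∑ i ∈ Finset.Iic k, x i) :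
    ∀ k : Fin p, ∑ i ∈ Finset.Iic k, g i ≤ ∑ i ∈ Finset.Iic k, avgMod x j l i := by
  intro k
  by_cases hkj : k < j
  · have : ∀ i ∈ Finset.Iic k, avgMod x j l i = x i := by
      intro i hi
      apply avgMod_not_mem
      intro hmem
      exact absurd ((Finset.mem_Icc.1 hmem).1.trans (Finset.mem_Iic.1 hi)) (not_le.2 hkj)
    rw [Finset.sum_congr rfl this]
    exact hcon_lo k hkj
  · push_neg at hkj
    by_cases hlk : l ≤ k
    · rw [sum_avgMod_subset x hjl (fun i hi => Finset.mem_Iic.2 ((Finset.mem_Icc.1 hi).2.trans hlk))]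
      exact hcon_hi k hlk
    · push_neg at hlk
      have hkl : k ≤ l := hlk.le
      have hn := cardI_pos (j := j) (l := l) hjl
      have hA : ∑ i ∈ Finset.Iio j, g i ≤ ∑ i ∈ Finset.Iio j, x i := sum_Iio_le hcon_lo
      have hAB : ∑ i ∈ Finset.Iic l, g i ≤ ∑ i ∈ Finset.Iic l, x i := hcon_hi l (le_refl _)
      rw [Iic_split hjl g, Iic_split hjl x] at hAB
      rw [Iic_split hkj g, Iic_split hkj (avgMod x j l)]
      have hmid : ∑ i ∈ Finset.Icc j k, avgMod x j l i =
          ((Finset.Icc j k).card : ℝ) *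
            ((∑ i ∈ Finset.Icc j l, x i) / ((Finset.Icc j l).card : ℝ)) := by
        rw [Finset.sum_congr rfl (fun i hi => avgMod_mem x
          (Finset.mem_Icc.2 ⟨(Finset.mem_Icc.1 hi).1, (Finset.mem_Icc.1 hi).2.trans hkl⟩)),
          Finset.sum_const, nsmul_eq_mul]
      rw [hmid]
      have hm : ((Finset.Icc j k).card : ℝ) ≤ ((Finset.Icc j l).card : ℝ) := by
        exact_mod_cast Finset.card_le_card (Finset.Icc_subset_Icc_right hkl)
      have hm0 : (0:ℝ) ≤ ((Finset.Icc j k).card : ℝ) := Nat.cast_nonneg _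
      set n := ((Finset.Icc j l).card : ℝ)
      set m := ((Finset.Icc j k).card : ℝ)
      set A := ∑ i ∈ Finset.Iio j, g i
      set P := ∑ i ∈ Finset.Icc j k, g i
      set B := ∑ i ∈ Finset.Icc j l, g i
      set A' := ∑ i ∈ Finset.Iio j, x i
      set B' := ∑ i ∈ Finset.Icc j l, x i
      have hP : n * P ≤ m * B := hpre k hkj hkl
      have hIio : ∑ i ∈ Finset.Iio j, avgMod x j l i = A' :=
        Finset.sum_congr rfl fun i hi => avgMod_not_mem x fun hmem =>
          absurd (Finset.mem_Icc.1 hmem).1 (not_le.2 (Finset.mem_Iio.1 hi))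
      rw [hIio]
      rw [← mul_le_mul_iff_right₀ hn]
      have hrw : n * (A' + m * (B' / n)) = n * A' + m * B' := by
        field_simp
      rw [hrw, mul_add]
      nlinarith [mul_le_mul_of_nonneg_left hA (sub_nonneg.2 hm),
        mul_le_mul_of_nonneg_left hAB hm0]

lemma le_self_avgMod {g : Fin p → ℝ} (hjl : j ≤ l)
    (hpre : ∀ k : Fin p, j ≤ k → k ≤ l →
      ((Finset.Icc j l).card : ℝ) * ∑ i ∈ Finset.Icc j k, g i ≤
        ((Finset.Icc j k).card : ℝ) * ∑ i ∈ Finset.Icc j l, g i) :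
    ∀ k : Fin p, ∑ i ∈ Finset.Iic k, g i ≤ ∑ i ∈ Finset.Iic k, avgMod g j l i :=
  LP_sums hjl hpre (fun _ _ => le_refl _) (fun _ _ => le_refl _)

/-- prefix property holds (with equality) for the averaged function -/
lemma hpre_avgMod (g : Fin p → ℝ) (hjl : j ≤ l) :
    ∀ k : Fin p, j ≤ k → k ≤ l →
      ((Finset.Icc j l).card : ℝ) * ∑ i ∈ Finset.Icc j k, avgMod g j l i ≤
        ((Finset.Icc j k).card : ℝ) * ∑ i ∈ Finset.Icc j l, avgMod g j l i := by
  intro k hjk hkl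
  have hn := cardI_pos (j := j) (l := l) hjl
  rw [sum_Icc_avgMod g hjl]
  have hmid : ∑ i ∈ Finset.Icc j k, avgMod g j l i =
      ((Finset.Icc j k).card : ℝ) *
        ((∑ i ∈ Finset.Icc j l, g i) / ((Finset.Icc j l).card : ℝ)) := by
    rw [Finset.sum_congr rfl (fun i hi => avgMod_mem g
      (Finset.mem_Icc.2 ⟨(Finset.mem_Icc.1 hi).1, (Finset.mem_Icc.1 hi).2.trans hkl⟩)),
      Finset.sum_const, nsmul_eq_mul]
  rw [hmid]
  apply le_of_eq
  rw [mul_left_comm, mul_div_assoc', mul_div_cancel_left₀ _ (ne_of_gt hn)]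



lemma sum_univ_diff (f g : Fin p → ℝ) (hoff : ∀ i ∉ Finset.Icc j l, f i = g i) :
    ∑ i, f i - ∑ i, g i = ∑ i ∈ Finset.Icc j l, (f i - g i) := by
  rw [← Finset.sum_sub_distrib]
  exact (Finset.sum_subset (Finset.subset_univ _)
    (fun i _ hi => by rw [hoff i hi]; ring)).symm

end ODS

open ODS

set_option maxHeartbeats 1000000

/-- on a segment where `y_i − λ_i` is nondecreasing, the minimizer of
the perturbed problem is constant, and it also minimizes the problem with `y, λ`
averaged over the segment. -/
theorem lp_perturbed_averaging {p : ℕ} (lam : Fin p → ℝ)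
    (hlam : Antitone lam) (hlamnn : ∀ i, 0 ≤ lam i)
    (y : Fin p → ℝ) (hy : Antitone y) (hynn : ∀ i, 0 ≤ y i)
    (μ : ℝ) (hμ : 0 < μ)
    (wstar : Fin p → ℝ)
    (hfeas : LPFeas y lam wstar)
    (hopt : ∀ u : Fin p → ℝ, LPFeas y lam u → fmu lam μ wstar ≤ fmu lam μ u)
    (j l : Fin p) (hjl : j < l)
    (hchain : ∀ i₁ i₂ : Fin p, j ≤ i₁ → i₁ ≤ i₂ → i₂ ≤ l →
      y i₁ - lam i₁ ≤ y i₂ - lam i₂) :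
    -- (i) the solution is constant on the segment
    (∀ i ∈ Finset.Icc j l, wstar i = wstar j) ∧
    -- (ii) w* also solves the perturbed problem with averaged data
    LPFeas (avgMod y j l) (avgMod lam j l) wstar ∧
    (∀ u : Fin p → ℝ, LPFeas (avgMod y j l) (avgMod lam j l) u →
      fmu (avgMod lam j l) μ wstar ≤ fmu (avgMod lam j l) μ u) := by
  obtain ⟨hcon, hmono, hwnn⟩ := hfeas
  have hjl' : j ≤ l := hjl.le
  have hjmem : j ∈ Finset.Icc j l := Finset.mem_Icc.2 ⟨le_refl _, hjl'⟩
  have hn := cardI_pos (j := j) (l := l) hjl'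
  -- the data function g = y - λ and its prefix-average property
  have hgpre : ∀ k : Fin p, j ≤ k → k ≤ l →
      ((Finset.Icc j l).card : ℝ) * ∑ i ∈ Finset.Icc j k, (y i - lam i) ≤
        ((Finset.Icc j k).card : ℝ) * ∑ i ∈ Finset.Icc j l, (y i - lam i) :=
    fun k hjk hkl => prefix_avg (g := fun t => y t - lam t)
      (fun a b hja hab hbl => hchain a b hja hab hbl) hjk hkl
  -- Step A : the averaged w* is feasible
  have hwbarfeas : LPFeas y lam (avgMod wstar j l) :=
    ⟨LP_sums hjl' hgpre (fun k _ => hcon k) (fun k _ => hcon k),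
      avgMod_antitone hmono hjl', avgMod_nonneg hwnn⟩
  set c : ℝ := (∑ k ∈ Finset.Icc j l, wstar k) / ((Finset.Icc j l).card : ℝ) with hc
  have hwbar_mem : ∀ i ∈ Finset.Icc j l, avgMod wstar j l i = c :=
    fun i hi => avgMod_mem wstar hi
  -- Step B : objective comparison forces w* constant on the segment
  have hd1 : ∑ i, lam i * wstar i - ∑ i, lam i * avgMod wstar j l i =
      ∑ i ∈ Finset.Icc j l, (lam i * wstar i - lam i * c) := by
    rw [sum_univ_diff (j := j) (l := l) _ _ (fun i hi => by simp only [avgMod_not_mem wstar hi])]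
    exact Finset.sum_congr rfl fun i hi => by rw [hwbar_mem i hi]
  have hd2 : ∑ i, wstar i ^ 2 - ∑ i, avgMod wstar j l i ^ 2 =
      ∑ i ∈ Finset.Icc j l, (wstar i - c) ^ 2 := by
    rw [sum_univ_diff (j := j) (l := l) _ _ (fun i hi => by simp only [avgMod_not_mem wstar hi])]
    have := sum_sq_avg wstar hjl'
    calc ∑ i ∈ Finset.Icc j l, (wstar i ^ 2 - avgMod wstar j l i ^ 2)
        = ∑ i ∈ Finset.Icc j l, (wstar i ^ 2 - c ^ 2) :=
          Finset.sum_congr rfl fun i hi => by rw [hwbar_mem i hi]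
      _ = ∑ i ∈ Finset.Icc j l, wstar i ^ 2 - ((Finset.Icc j l).card : ℝ) * c ^ 2 := by
          rw [Finset.sum_sub_distrib, Finset.sum_const, nsmul_eq_mul]
      _ = ∑ i ∈ Finset.Icc j l, (wstar i - c) ^ 2 := by rw [this]; ring
  have hT1 : 0 ≤ ∑ i ∈ Finset.Icc j l, (lam i * wstar i - lam i * c) := by
    rw [Finset.sum_sub_distrib, ← Finset.sum_mul, sub_nonneg, hc, ← mul_div_assoc,
      div_le_iff₀ hn]
    have := chebyshev (j := j) (l := l) hlam hmono
    linarith [this]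
  have hT2 : 0 ≤ ∑ i ∈ Finset.Icc j l, (wstar i - c) ^ 2 :=
    Finset.sum_nonneg fun i _ => sq_nonneg _
  have hfle : fmu lam μ wstar ≤ fmu lam μ (avgMod wstar j l) :=
    hopt _ hwbarfeas
  have hT2z : ∑ i ∈ Finset.Icc j l, (wstar i - c) ^ 2 = 0 := by
    unfold fmu at hfle
    nlinarith [hfle, hT1, hT2]
  have hconst : ∀ i ∈ Finset.Icc j l, wstar i = c := by
    intro i hi
    have := (Finset.sum_eq_zero_iff_of_nonneg (fun i _ => sq_nonneg _)).1 hT2z i hi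
    have := pow_eq_zero_iff (n := 2) (by norm_num) |>.1 this
    linarith [this]
  have havgw : avgMod wstar j l = wstar := by
    funext i
    by_cases hi : i ∈ Finset.Icc j l
    · rw [hwbar_mem i hi]; exact (hconst i hi).symm
    · exact avgMod_not_mem wstar hi
  have hsub : ∀ i, avgMod y j l i - avgMod lam j l i =
      avgMod (fun t => y t - lam t) j l i := by
    intro i
    by_cases hi : i ∈ Finset.Icc j l
    · rw [avgMod_mem y hi, avgMod_mem lam hi, avgMod_mem _ hi, div_sub_div_same,
        ← Finset.sum_sub_distrib]
    · rw [avgMod_not_mem y hi, avgMod_not_mem lam hi, avgMod_not_mem _ hi]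
  have hglow : ∀ k : Fin p, k < j →
      ∑ i ∈ Finset.Iic k, avgMod (fun t => y t - lam t) j l i =
        ∑ i ∈ Finset.Iic k, (y i - lam i) := by
    intro k hk
    refine Finset.sum_congr rfl fun i hi => avgMod_not_mem _ fun hmem =>
      absurd ((Finset.mem_Icc.1 hmem).1.trans (Finset.mem_Iic.1 hi)) (not_le.2 hk)
  have hghigh : ∀ k : Fin p, l ≤ k →
      ∑ i ∈ Finset.Iic k, avgMod (fun t => y t - lam t) j l i =
        ∑ i ∈ Finset.Iic k, (y i - lam i) := by
    intro k hk
    exact sum_avgMod_subset _ hjl'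
      (fun i hi => Finset.mem_Iic.2 ((Finset.mem_Icc.1 hi).2.trans hk))
  have hfeas2 : LPFeas (avgMod y j l) (avgMod lam j l) wstar := by
    refine ⟨fun k => ?_, hmono, hwnn⟩
    calc ∑ i ∈ Finset.Iic k, (avgMod y j l i - avgMod lam j l i)
        = ∑ i ∈ Finset.Iic k, avgMod (fun t => y t - lam t) j l i :=
          Finset.sum_congr rfl fun i _ => hsub i
      _ ≤ ∑ i ∈ Finset.Iic k, avgMod wstar j l i :=
          LP_sums hjl' (hpre_avgMod _ hjl')
            (fun k hk => by rw [hglow k hk]; exact hcon k)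
            (fun k hk => by rw [hghigh k hk]; exact hcon k) k
      _ = ∑ i ∈ Finset.Iic k, wstar i := by rw [havgw]
  refine ⟨fun i hi => (hconst i hi).trans (hconst j hjmem).symm, hfeas2, ?_⟩
  rintro u ⟨hu1, humono, hunn⟩
  have hu1' : ∀ k : Fin p, ∑ i ∈ Finset.Iic k, avgMod (fun t => y t - lam t) j l i ≤
      ∑ i ∈ Finset.Iic k, u i := fun k => by
    calc ∑ i ∈ Finset.Iic k, avgMod (fun t => y t - lam t) j l i
        = ∑ i ∈ Finset.Iic k, (avgMod y j l i - avgMod lam j l i) :=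
          Finset.sum_congr rfl fun i _ => (hsub i).symm
      _ ≤ _ := hu1 k
  have hufeas : LPFeas y lam (avgMod u j l) := by
    refine ⟨fun k => ?_, avgMod_antitone humono hjl', avgMod_nonneg hunn⟩
    calc ∑ i ∈ Finset.Iic k, (y i - lam i)
        ≤ ∑ i ∈ Finset.Iic k, avgMod (fun t => y t - lam t) j l i :=
          le_self_avgMod hjl' hgpre k
      _ ≤ ∑ i ∈ Finset.Iic k, avgMod u j l i :=
          LP_sums hjl' (hpre_avgMod _ hjl') (fun k _ => hu1' k) (fun k _ => hu1' k) k
  set cu : ℝ := (∑ k ∈ Finset.Icc j l, u k) / ((Finset.Icc j l).card : ℝ) with hcu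
  have hubar_mem : ∀ i ∈ Finset.Icc j l, avgMod u j l i = cu := fun i hi => avgMod_mem u hi
  have EA : ∑ i, avgMod lam j l i * wstar i = ∑ i, lam i * wstar i := by
    have h0 : ∑ i ∈ Finset.Icc j l,
        (avgMod lam j l i * wstar i - lam i * wstar i) = 0 := by
      calc ∑ i ∈ Finset.Icc j l, (avgMod lam j l i * wstar i - lam i * wstar i)
          = ∑ i ∈ Finset.Icc j l, ((avgMod lam j l i - lam i) * c) :=
            Finset.sum_congr rfl fun i hi => by rw [hconst i hi]; ring
        _ = (∑ i ∈ Finset.Icc j l, avgMod lam j l i - ∑ i ∈ Finset.Icc j l, lam i) * c := by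
            rw [← Finset.sum_mul, Finset.sum_sub_distrib]
        _ = 0 := by rw [sum_Icc_avgMod lam hjl']; ring
    have hdd := sum_univ_diff (j := j) (l := l) (fun i => avgMod lam j l i * wstar i)
      (fun i => lam i * wstar i) (fun i hi => by simp only [avgMod_not_mem lam hi])
    linarith [hdd, h0]
  have EB : ∑ i, lam i * avgMod u j l i = ∑ i, avgMod lam j l i * avgMod u j l i := by
    have h0 : ∑ i ∈ Finset.Icc j l,
        (lam i * avgMod u j l i - avgMod lam j l i * avgMod u j l i) = 0 := by
      calc ∑ i ∈ Finset.Icc j l, (lam i * avgMod u j l i - avgMod lam j l i * avgMod u j l i)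
          = ∑ i ∈ Finset.Icc j l, ((lam i - avgMod lam j l i) * cu) :=
            Finset.sum_congr rfl fun i hi => by rw [hubar_mem i hi]; ring
        _ = (∑ i ∈ Finset.Icc j l, lam i - ∑ i ∈ Finset.Icc j l, avgMod lam j l i) * cu := by
            rw [← Finset.sum_mul, Finset.sum_sub_distrib]
        _ = 0 := by rw [sum_Icc_avgMod lam hjl']; ring
    have hdd := sum_univ_diff (j := j) (l := l) (fun i => lam i * avgMod u j l i)
      (fun i => avgMod lam j l i * avgMod u j l i)
      (fun i hi => by simp only [avgMod_not_mem u hi, avgMod_not_mem lam hi])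
    linarith [hdd, h0]
  have EC1 : ∑ i, avgMod lam j l i * avgMod u j l i = ∑ i, avgMod lam j l i * u i := by
    have h0 : ∑ i ∈ Finset.Icc j l,
        (avgMod lam j l i * avgMod u j l i - avgMod lam j l i * u i) = 0 := by
      calc ∑ i ∈ Finset.Icc j l, (avgMod lam j l i * avgMod u j l i - avgMod lam j l i * u i)
          = ∑ i ∈ Finset.Icc j l,
              ((∑ t ∈ Finset.Icc j l, lam t) / ((Finset.Icc j l).card : ℝ) * avgMod u j l i -
               (∑ t ∈ Finset.Icc j l, lam t) / ((Finset.Icc j l).card : ℝ) * u i) :=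
            Finset.sum_congr rfl fun i hi => by rw [avgMod_mem lam hi]
        _ = (∑ t ∈ Finset.Icc j l, lam t) / ((Finset.Icc j l).card : ℝ) *
              (∑ i ∈ Finset.Icc j l, avgMod u j l i - ∑ i ∈ Finset.Icc j l, u i) := by
            rw [Finset.sum_sub_distrib, ← Finset.mul_sum, ← Finset.mul_sum]; ring
        _ = 0 := by rw [sum_Icc_avgMod u hjl']; ring
    have hdd := sum_univ_diff (j := j) (l := l) (fun i => avgMod lam j l i * avgMod u j l i)
      (fun i => avgMod lam j l i * u i) (fun i hi => by simp only [avgMod_not_mem u hi])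
    linarith [hdd, h0]
  have EC2 : ∑ i, avgMod u j l i ^ 2 ≤ ∑ i, u i ^ 2 := by
    have hvar := sum_sq_avg u hjl'
    have h0 : ∑ i ∈ Finset.Icc j l, (avgMod u j l i ^ 2 - u i ^ 2) ≤ 0 := by
      have h1 : ∑ i ∈ Finset.Icc j l, (avgMod u j l i ^ 2 - u i ^ 2) =
          ((Finset.Icc j l).card : ℝ) * cu ^ 2 - ∑ i ∈ Finset.Icc j l, u i ^ 2 := by
        rw [Finset.sum_sub_distrib]
        congr 1
        rw [Finset.sum_congr rfl (fun i hi => by rw [hubar_mem i hi]),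
          Finset.sum_const, nsmul_eq_mul]
      rw [h1, hvar]
      have := Finset.sum_nonneg (s := Finset.Icc j l)
        (f := fun i => (u i - cu) ^ 2) (fun i _ => sq_nonneg _)
      linarith
    have hdd := sum_univ_diff (j := j) (l := l) (fun i => avgMod u j l i ^ 2) (fun i => u i ^ 2)
      (fun i hi => by simp only [avgMod_not_mem u hi])
    linarith [hdd, h0]
  calc fmu (avgMod lam j l) μ wstar = fmu lam μ wstar := by unfold fmu; rw [EA]
    _ ≤ fmu lam μ (avgMod u j l) := hopt _ hufeas
    _ = fmu (avgMod lam j l) μ (avgMod u j l) := by unfold fmu; rw [EB]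
    _ ≤ fmu (avgMod lam j l) μ u := by
        unfold fmu
        rw [EC1]
        have h2 : μ / 2 * ∑ i, avgMod u j l i ^ 2 ≤ μ / 2 * ∑ i, u i ^ 2 :=
          mul_le_mul_of_nonneg_left EC2 (by positivity)
        linarith
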